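/- The polynomial ad ∈ ℤ[a,b,c,d,e,f] is not an integer linear combination of the six 2×2-minor polynomials of the K₄ period matrix: ab+ad+af+be+de+ef+bf+df, ad+de+df+ef, ac+ad+ae+ce+de+cf+df+ef, be+de+df+ef, bc+bd+be+cd+de+cf+df+ef, cf+df+ef+de. -/
import Mathlib


open MvPolynomial

/-- The six 2×2 minors (up to sign) of the K₄ period matrix, as polynomials in
`ℤ[a,b,c,d,e,f]` with `a = X 0, …, f = X 5`. -/
noncomputable def K4minors : Fin 6 → MvPolynomial (Fin 6) ℤ :=
  fun i =>
    let a := X (0 : Fin 6); let b := X (1 : Fin 6); let c := X (2 : Fin 6)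
    let d := X (3 : Fin 6); let e := X (4 : Fin 6); let f := X (5 : Fin 6)
    ![a*b+a*d+a*f+b*e+d*e+e*f+b*f+d*f,
      a*d+d*e+d*f+e*f,
      a*c+a*d+a*e+c*e+d*e+c*f+d*f+e*f,
      b*e+d*e+d*f+e*f,
      b*c+b*d+b*e+c*d+d*e+c*f+d*f+e*f,
      c*f+d*f+e*f+d*e] i

set_option maxHeartbeats 2000000 in
theorem stmt_15 :
    ¬ ∃ n : Fin 6 → ℤ,
        X (0 : Fin 6) * X (3 : Fin 6) = ∑ i, n i • K4minors i := by
  rintro ⟨n, h⟩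
  have k0 : K4minors 0 = X 0*X 1+X 0*X 3+X 0*X 5+X 1*X 4+X 3*X 4+X 4*X 5+X 1*X 5+X 3*X 5 := rfl
  have k1 : K4minors 1 = X 0*X 3+X 3*X 4+X 3*X 5+X 4*X 5 := rfl
  have k2 : K4minors 2 = X 0*X 2+X 0*X 3+X 0*X 4+X 2*X 4+X 3*X 4+X 2*X 5+X 3*X 5+X 4*X 5 := rfl
  have k3 : K4minors 3 = X 1*X 4+X 3*X 4+X 3*X 5+X 4*X 5 := rfl
  have k4 : K4minors 4 = X 1*X 2+X 1*X 3+X 1*X 4+X 2*X 3+X 3*X 4+X 2*X 5+X 3*X 5+X 4*X 5 := rfl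
  have k5 : K4minors 5 = X 2*X 5+X 3*X 5+X 4*X 5+X 3*X 4 := rfl
  rw [Fin.sum_univ_six] at h
  have e1 := congrArg (eval (fun j : Fin 6 => if j = 0 ∨ j = 1 then (1:ℤ) else 0)) h
  have e2 := congrArg (eval (fun j : Fin 6 => if j = 0 ∨ j = 2 then (1:ℤ) else 0)) h
  have e3 := congrArg (eval (fun j : Fin 6 => if j = 1 ∨ j = 2 then (1:ℤ) else 0)) h
  have e4 := congrArg (eval (fun j : Fin 6 => if j = 2 ∨ j = 5 then (1:ℤ) else 0)) h
  have e5 := congrArg (eval (fun j : Fin 6 => if j = 1 ∨ j = 4 then (1:ℤ) else 0)) h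
  have e6 := congrArg (eval (fun j : Fin 6 => if j = 0 ∨ j = 3 then (1:ℤ) else 0)) h
  have e7 := congrArg (eval (fun j : Fin 6 => if j = 3 ∨ j = 4 then (1:ℤ) else 0)) h
  simp only [k0, k1, k2, k3, k4, k5, zsmul_eq_mul, map_add, map_mul, map_intCast,
    eval_X, eval_mul, eval_add] at e1 e2 e3 e4 e5 e6 e7
  simp (config := { decide := true }) at e1 e2 e3 e4 e5 e6 e7
  omega
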